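/- Let q ∈ (0,1) and ν > -1 with 4(1-q)(1-q^ν) > q^ν. Then for every z in the open unit disk U, the derivative of the normalized Jackson second q-Bessel function satisfies |(h_ν^{(2)})'(z;q)| ≤ (4(1-q)(1-q^ν) / (4(1-q)(1-q^ν) - q^ν))^2, where (h_ν^{(2)})'(z;q) = Σ_{n≥0} (n+1) K_n z^{n}. -/

import Mathlib

open Complex

/-- q-Pochhammer symbol (a;q)_n = ∏_{k=1}^n (1 - a q^{k-1}). -/
noncomputable def qPoch (a q : ℝ) (n : ℕ) : ℝ :=
  ∏ k ∈ Finset.range n, (1 - a * q ^ k)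

/-- Coefficients of the normalized Jackson second q-Bessel function. -/
noncomputable def K (q ν : ℝ) (n : ℕ) : ℝ :=
  (-1) ^ n * q ^ ((n : ℝ) * ((n : ℝ) + ν)) /
    (4 ^ n * qPoch q q n * qPoch (q ^ (ν + 1)) q n)

/-- Normalized Jackson second q-Bessel function h_ν^{(2)}(z;q). -/
noncomputable def h2 (q ν : ℝ) (z : ℂ) : ℂ :=
  ∑' n : ℕ, (K q ν n : ℂ) * z ^ (n + 1)

/-- Derivative of the normalized Jackson second q-Bessel function. -/
noncomputable def h2' (q ν : ℝ) (z : ℂ) : ℂ :=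
  ∑' n : ℕ, ((n : ℂ) + 1) * (K q ν n : ℂ) * z ^ n

/-- m-th partial sum of h_ν^{(2)}(z;q). -/
noncomputable def h2p (q ν : ℝ) (m : ℕ) (z : ℂ) : ℂ :=
  z + ∑ n ∈ Finset.Icc 1 m, (K q ν n : ℂ) * z ^ (n + 1)

/-- Derivative of the m-th partial sum of h_ν^{(2)}(z;q). -/
noncomputable def h2p' (q ν : ℝ) (m : ℕ) (z : ℂ) : ℂ :=
  1 + ∑ n ∈ Finset.Icc 1 m, ((n : ℂ) + 1) * (K q ν n : ℂ) * z ^ n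

lemma qPoch_q_bounds (q : ℝ) (hq0 : 0 < q) (hq1 : q < 1) (n : ℕ) :
    (1 - q) ^ n ≤ qPoch q q n ∧ 0 < qPoch q q n := by
  constructor
  · have he : (1 - q) ^ n = ∏ _k ∈ Finset.range n, (1 - q) := by simp
    rw [qPoch, he]
    apply Finset.prod_le_prod
    · intro k _; linarith
    · intro k _
      have hk : q ^ k ≤ 1 := pow_le_one₀ hq0.le hq1.le
      nlinarith [pow_nonneg hq0.le k]
  · apply Finset.prod_pos
    intro k _
    have hk : q ^ k ≤ 1 := pow_le_one₀ hq0.le hq1.le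
    nlinarith [pow_nonneg hq0.le k]

lemma qPoch_qv_bounds (q ν : ℝ) (hq0 : 0 < q) (hq1 : q < 1) (hQ1 : q ^ ν < 1) (n : ℕ) :
    (1 - q ^ ν) ^ n ≤ qPoch (q ^ (ν + 1)) q n ∧ 0 < qPoch (q ^ (ν + 1)) q n := by
  have key : ∀ k : ℕ, q ^ (ν + 1) * q ^ k ≤ q ^ ν := by
    intro k
    have h1 : q ^ (ν + 1) * q ^ k = q ^ (ν + 1 + k) := by
      rw [← Real.rpow_natCast q k, ← Real.rpow_add hq0]
    rw [h1]
    apply Real.rpow_le_rpow_of_exponent_ge hq0 hq1.le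
    have : (0 : ℝ) ≤ k := Nat.cast_nonneg k
    linarith
  constructor
  · have he : (1 - q ^ ν) ^ n = ∏ _k ∈ Finset.range n, (1 - q ^ ν) := by simp
    rw [qPoch, he]
    apply Finset.prod_le_prod
    · intro k _; linarith
    · intro k _; have := key k; linarith
  · apply Finset.prod_pos
    intro k _; have := key k; linarith

lemma Kabs_le (q ν : ℝ) (hq0 : 0 < q) (hq1 : q < 1) (hQ1 : q ^ ν < 1) (n : ℕ) :
    |K q ν n| ≤ (q ^ ν / (4 * (1 - q) * (1 - q ^ ν))) ^ n := by
  have hQ0 : 0 < q ^ ν := Real.rpow_pos_of_pos hq0 ν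
  have h1q : 0 < 1 - q := by linarith
  have h1Q : 0 < 1 - q ^ ν := by linarith
  obtain ⟨hP1, hP1pos⟩ := qPoch_q_bounds q hq0 hq1 n
  obtain ⟨hP2, hP2pos⟩ := qPoch_qv_bounds q ν hq0 hq1 hQ1 n
  have hN : q ^ ((n : ℝ) * ((n : ℝ) + ν)) ≤ (q ^ ν) ^ n := by
    have h1 : (q ^ ν) ^ n = q ^ (ν * (n : ℝ)) := by
      rw [← Real.rpow_natCast (q ^ ν) n, ← Real.rpow_mul hq0.le]
    rw [h1]
    apply Real.rpow_le_rpow_of_exponent_ge hq0 hq1.le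
    have : (0 : ℝ) ≤ (n : ℝ) * (n : ℝ) := mul_nonneg (Nat.cast_nonneg n) (Nat.cast_nonneg n)
    nlinarith
  have hD : (4 * (1 - q) * (1 - q ^ ν)) ^ n ≤ 4 ^ n * qPoch q q n * qPoch (q ^ (ν + 1)) q n := by
    have : (4 * (1 - q) * (1 - q ^ ν)) ^ n = 4 ^ n * (1 - q) ^ n * (1 - q ^ ν) ^ n := by
      rw [mul_pow, mul_pow]
    rw [this]
    have h4 : (0 : ℝ) < 4 ^ n := by positivity
    have hp1n : (0 : ℝ) ≤ (1 - q) ^ n := by positivity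
    have hp2n : (0 : ℝ) ≤ (1 - q ^ ν) ^ n := by positivity
    calc 4 ^ n * (1 - q) ^ n * (1 - q ^ ν) ^ n
        ≤ 4 ^ n * qPoch q q n * (1 - q ^ ν) ^ n := by
          apply mul_le_mul_of_nonneg_right _ hp2n
          exact mul_le_mul_of_nonneg_left hP1 h4.le
      _ ≤ 4 ^ n * qPoch q q n * qPoch (q ^ (ν + 1)) q n := by
          apply mul_le_mul_of_nonneg_left hP2
          positivity
  have hDpos : 0 < 4 ^ n * qPoch q q n * qPoch (q ^ (ν + 1)) q n := by positivity
  have hLpos : (0 : ℝ) < 4 * (1 - q) * (1 - q ^ ν) := by positivity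
  rw [K, abs_div, abs_mul, _root_.abs_pow, abs_neg, abs_one, one_pow, one_mul,
    abs_of_pos (Real.rpow_pos_of_pos hq0 _), abs_of_pos hDpos, div_pow]
  exact div_le_div₀ (by positivity) hN (by positivity) hD

theorem stmt1 (q ν : ℝ) (hq : q ∈ Set.Ioo (0 : ℝ) 1) (hν : -1 < ν)
    (hc : 4 * (1 - q) * (1 - q ^ ν) > q ^ ν) :
    ∀ z : ℂ, ‖z‖ < 1 →
      ‖h2' q ν z‖ ≤ (4 * (1 - q) * (1 - q ^ ν) / (4 * (1 - q) * (1 - q ^ ν) - q ^ ν)) ^ 2 := by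
  intro z hz
  obtain ⟨hq0, hq1⟩ := hq
  have hQ0 : 0 < q ^ ν := Real.rpow_pos_of_pos hq0 ν
  have hLpos : (0 : ℝ) < 4 * (1 - q) * (1 - q ^ ν) := lt_trans hQ0 hc
  have h1q : 0 < 1 - q := by linarith
  have h1Q : 0 < 1 - q ^ ν := by nlinarith
  have hQ1 : q ^ ν < 1 := by linarith
  set r : ℝ := q ^ ν / (4 * (1 - q) * (1 - q ^ ν)) with hr_def
  have hr0 : 0 < r := by positivity
  have hr1 : r < 1 := (div_lt_one hLpos).mpr hc
  have hrnorm : ‖r‖ < 1 := by rwa [Real.norm_eq_abs, abs_of_pos hr0]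
  -- summability of the majorant
  have hsum1 : Summable (fun n : ℕ => (n : ℝ) * r ^ n) := by
    simpa using summable_pow_mul_geometric_of_norm_lt_one 1 hrnorm
  have hsum2 : Summable (fun n : ℕ => r ^ n) := summable_geometric_of_lt_one hr0.le hr1
  have hsum : Summable (fun n : ℕ => ((n : ℝ) + 1) * r ^ n) :=
    (hsum1.add hsum2).congr (fun n => by ring)
  -- termwise bound
  have hterm : ∀ n : ℕ, ‖((n : ℂ) + 1) * (K q ν n : ℂ) * z ^ n‖ ≤ ((n : ℝ) + 1) * r ^ n := by
    intro n
    have h1 : ‖((n : ℂ) + 1)‖ = (n : ℝ) + 1 := by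
      rw [show ((n : ℂ) + 1) = ((n + 1 : ℕ) : ℂ) by push_cast; ring, Complex.norm_natCast]
      push_cast; ring
    rw [norm_mul, norm_mul, h1, norm_pow]
    have hK : ‖(K q ν n : ℂ)‖ ≤ r ^ n := by
      rw [Complex.norm_real, Real.norm_eq_abs]
      exact Kabs_le q ν hq0 hq1 hQ1 n
    have hzn : ‖z‖ ^ n ≤ 1 := by
      apply pow_le_one₀ (norm_nonneg z)
      exact hz.le
    calc ((n : ℝ) + 1) * ‖(K q ν n : ℂ)‖ * ‖z‖ ^ n
        ≤ ((n : ℝ) + 1) * r ^ n * 1 := by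
          apply mul_le_mul (mul_le_mul_of_nonneg_left hK (by positivity)) hzn
            (by positivity) (by positivity)
      _ = ((n : ℝ) + 1) * r ^ n := by ring
  have hsummable_norm : Summable (fun n : ℕ => ‖((n : ℂ) + 1) * (K q ν n : ℂ) * z ^ n‖) :=
    Summable.of_nonneg_of_le (fun n => norm_nonneg _) hterm hsum
  -- main chain
  have step1 : ‖h2' q ν z‖ ≤ ∑' n : ℕ, ‖((n : ℂ) + 1) * (K q ν n : ℂ) * z ^ n‖ := by
    rw [h2']
    exact norm_tsum_le_tsum_norm hsummable_norm
  have step2 : (∑' n : ℕ, ‖((n : ℂ) + 1) * (K q ν n : ℂ) * z ^ n‖) ≤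
      ∑' n : ℕ, ((n : ℝ) + 1) * r ^ n :=
    Summable.tsum_le_tsum hterm hsummable_norm hsum
  have step3 : (∑' n : ℕ, ((n : ℝ) + 1) * r ^ n) =
      (4 * (1 - q) * (1 - q ^ ν) / (4 * (1 - q) * (1 - q ^ ν) - q ^ ν)) ^ 2 := by
    have split : (∑' n : ℕ, ((n : ℝ) + 1) * r ^ n) =
        (∑' n : ℕ, (n : ℝ) * r ^ n) + ∑' n : ℕ, r ^ n := by
      rw [← Summable.tsum_add hsum1 hsum2]
      exact tsum_congr (fun n => by ring)
    rw [split, tsum_coe_mul_geometric_of_norm_lt_one hrnorm, tsum_geometric_of_lt_one hr0.le hr1]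
    have hLQ : 4 * (1 - q) * (1 - q ^ ν) - q ^ ν ≠ 0 := by linarith
    have h1r : (1 : ℝ) - r ≠ 0 := by linarith
    rw [hr_def] at *
    field_simp
    ring
  linarith [step1, step2, step3.le, step3.ge]
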